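/- Let J be as given and suppose that every edge of the coding graph E_J is non-negative. If ω and ξ are finite paths in E_J with E(ω) = E(ξ) and r(ω) = r(ξ), then ω = ξ. -/

import Mathlib

/-- A finite directed multigraph. -/
structure FinGraph where
  V : Type
  E : Type
  fintV : Fintype V
  fintE : Fintype E
  src : E → V
  rng : E → V

variable {G : FinGraph}

/-- A finite path in the graph `G`: a source vertex together with a compatible
list of edges (a vertex is a path of length 0). -/
structure FPath (G : FinGraph) where
  source : G.V
  edges : List G.E
  head_src : ∀ e ∈ edges.head?, G.src e = source
  chain : edges.Chain' fun e f => G.rng e = G.src f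

/-- The range (terminal vertex) of a finite path. -/
def FPath.range (p : FPath G) : G.V :=
  p.edges.getLast?.elim p.source G.rng

/-- The length-0 path at a vertex. -/
def FPath.nil (G : FinGraph) (v : G.V) : FPath G :=
  ⟨v, [], by simp, List.isChain_nil⟩

/-- `p.Prefix q` : the path `p` is an initial segment of the path `q`. -/
def FPath.Prefix (p q : FPath G) : Prop :=
  p.source = q.source ∧ p.edges <+: q.edges

/-- The path obtained by removing the first edge (the tail `κ` of `ν = eκ`). -/
def FPath.tail (p : FPath G) : FPath G where
  source := p.edges.head?.elim p.source G.rng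
  edges := p.edges.tail
  head_src := by
    cases hp : p.edges with
    | nil => simp
    | cons a l =>
      have h : List.IsChain _ _ := p.chain
      rw [hp, List.isChain_cons] at h
      intro e he
      simp only [hp, List.head?_cons, Option.elim, List.tail_cons] at he ⊢
      exact (h.1 e he).symm
  chain := p.chain.tail

/-- An infinite path in the graph `G`. -/
structure IPath (G : FinGraph) where
  edges : ℕ → G.E
  chain : ∀ i, G.rng (edges i) = G.src (edges (i + 1))

/-- The source vertex of an infinite path. -/
def IPath.source (p : IPath G) : G.V := G.src (p.edges 0)

/-- The cylinder set `Z(p)` of a finite path `p`: all infinite paths with prefix `p`. -/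
def cylinder (p : FPath G) : Set (IPath G) :=
  {q | q.source = p.source ∧ ∀ i, (h : i < p.edges.length) → q.edges i = p.edges.get ⟨i, h⟩}

/-- A finite collection `S` of finite paths is a partition of the path `ν`:
the cylinder sets are pairwise disjoint with union `Z(ν)`. -/
def IsPartitionOfPath (S : Set (FPath G)) (ν : FPath G) : Prop :=
  S.Finite ∧ (∀ p ∈ S, ∀ q ∈ S, p ≠ q → cylinder p ∩ cylinder q = ∅) ∧
    (⋃ p ∈ S, cylinder p) = cylinder ν

/-- A finite collection `S` of finite paths is a partition of the vertex `v`. -/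
def IsPartitionOf (S : Set (FPath G)) (v : G.V) : Prop :=
  IsPartitionOfPath S (FPath.nil G v)

/-- Standing assumptions: no sinks, no sources, every cycle has an exit. -/
structure Standing (G : FinGraph) : Prop where
  no_sinks : ∀ v : G.V, ∃ e, G.src e = v
  no_sources : ∀ v : G.V, ∃ e, G.rng e = v
  cycles_exit : ∀ p : FPath G, p.edges ≠ [] → p.range = p.source →
    ∃ e ∈ p.edges, ∃ f, f ≠ e ∧ G.src f = G.src e

/-- The combinatorial conditions making `u_J = Σ_{(μ,ν) ∈ J} S_μ S_ν^*` a unitary: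
`J` is finite, `s(μ) = s(ν)`, `r(μ) = r(ν)`, `|ν| ≥ 1` for all `(μ,ν) ∈ J`, and both
families of cylinder sets are pairwise disjoint with union all of `E^∞`. -/
structure IsUnitaryJ (G : FinGraph) (J : Set (FPath G × FPath G)) : Prop where
  finite : J.Finite
  src_eq : ∀ p ∈ J, (Prod.fst p).source = (Prod.snd p).source
  rng_eq : ∀ p ∈ J, FPath.range (Prod.fst p) = FPath.range (Prod.snd p)
  ne_nil : ∀ p ∈ J, (Prod.snd p).edges ≠ []
  disj₁ : ∀ p ∈ J, ∀ q ∈ J, p ≠ q → cylinder (Prod.fst p) ∩ cylinder (Prod.fst q) = ∅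
  union₁ : (⋃ p ∈ J, cylinder (Prod.fst p)) = Set.univ
  disj₂ : ∀ p ∈ J, ∀ q ∈ J, p ≠ q → cylinder (Prod.snd p) ∩ cylinder (Prod.snd q) = ∅
  union₂ : (⋃ p ∈ J, cylinder (Prod.snd p)) = Set.univ

/-- Adjacency in the coding graph `E_J`: there is an edge from `p = (μ₁, e₁ν₁)` to
`q = (μ₂, e₂ν₂)` iff the tail `ν₁` and `μ₂` are prefix-comparable
(the combinatorial content of `S_{ν₁}^* S_{μ₂} ≠ 0`). -/
def CGAdj (p q : FPath G × FPath G) : Prop :=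
  FPath.Prefix p.2.tail q.1 ∨ FPath.Prefix q.1 p.2.tail

/-- The degree `|μ₂| − |ν₁|` of the coding-graph edge from `p` to `q`. -/
def cgDeg (p q : FPath G × FPath G) : ℤ :=
  (q.1.edges.length : ℤ) - (p.2.tail.edges.length : ℤ)

/-- `IsAppend p q r` : the path `r` is the concatenation `p q`. -/
def IsAppend (p q r : FPath G) : Prop :=
  r.source = p.source ∧ q.source = p.range ∧ r.edges = p.edges ++ q.edges

/-- A finite path in the coding graph `E_J`, recorded by the (nonempty) list of
vertices of `J` it visits (a single vertex is a path of length 0). -/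
structure CGPath (G : FinGraph) (J : Set (FPath G × FPath G)) where
  verts : List (FPath G × FPath G)
  ne : verts ≠ []
  mem : ∀ v ∈ verts, v ∈ J
  adj : verts.Chain' CGAdj

/-- The `E`-label of a path in the coding graph: the list of distinguished first
edges `e` of the second coordinates of the vertices it visits. -/
def CGPath.elabel {J : Set (FPath G × FPath G)} (ω : CGPath G J) : List G.E :=
  ω.verts.filterMap fun v => v.2.edges.head?

/-- `IsLabelOf l γ` : `γ` is the `L_J`-label of the coding-graph path visiting the
vertices in the list `l` (all of whose edges are non-negative): the concatenation of
the `L_J`-labels of its edges, and the empty path at `r(μ)` for the length-0 path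
at a vertex `(μ, eν)`. -/
inductive IsLabelOf : List (FPath G × FPath G) → FPath G → Prop
  | single (p : FPath G × FPath G) (γ : FPath G) :
      γ.edges = [] → γ.source = FPath.range p.1 → IsLabelOf [p] γ
  | cons (p q : FPath G × FPath G) (rest : List (FPath G × FPath G)) (α γ δ : FPath G) :
      IsAppend p.2.tail α q.1 → IsLabelOf (q :: rest) γ → IsAppend α γ δ →
      IsLabelOf (p :: q :: rest) δ

/-- Every edge of the coding graph `E_J` is non-negative. -/
def AllEdgesNonneg (G : FinGraph) (J : Set (FPath G × FPath G)) : Prop :=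
  ∀ p ∈ J, ∀ q ∈ J, CGAdj p q → 0 ≤ cgDeg p q

/-- The coding graph `E_J` contains a non-positive cycle. -/
def HasNonposCycle (G : FinGraph) (J : Set (FPath G × FPath G)) : Prop :=
  ∃ ω : CGPath G J, 2 ≤ ω.verts.length ∧ ω.verts.getLast ω.ne = ω.verts.head ω.ne ∧
    ω.verts.Chain' fun p q => cgDeg p q ≤ 0

/-- All outgoing edges of the vertex `p` in the coding graph `E_J` are positive. -/
def AllOutPositive (G : FinGraph) (J : Set (FPath G × FPath G))
    (p : FPath G × FPath G) : Prop :=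
  ∀ q ∈ J, CGAdj p q → 0 < cgDeg p q

/-- `IsSnoc p f q` : the path `q` is `p` extended by the single edge `f`. -/
def IsSnoc (p : FPath G) (f : G.E) (q : FPath G) : Prop :=
  q.source = p.source ∧ q.edges = p.edges ++ [f]

/-- `IsSplitting G J p J'` : `J'` is the splitting of `J` at the vertex `p = (μ, eν)`,
i.e. `J' = (J ∖ {(μ,eν)}) ∪ {(μf, eνf) : f ∈ E¹, s(f) = r(μ)}`. -/
def IsSplitting (G : FinGraph) (J : Set (FPath G × FPath G)) (p : FPath G × FPath G)
    (J' : Set (FPath G × FPath G)) : Prop :=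
  p ∈ J ∧ ∀ q, q ∈ J' ↔ (q ∈ J ∧ q ≠ p) ∨
    ∃ f, G.src f = FPath.range p.1 ∧ IsSnoc p.1 f q.1 ∧ IsSnoc p.2 f q.2

/-- The set of negative edges of the coding graph `E_J`. -/
def negEdgeSet (G : FinGraph) (J : Set (FPath G × FPath G)) :
    Set ((FPath G × FPath G) × (FPath G × FPath G)) :=
  {e | e.1 ∈ J ∧ e.2 ∈ J ∧ CGAdj e.1 e.2 ∧ cgDeg e.1 e.2 < 0}

/-- `IsFinalNeg G J p q ω d` : the edge from `p` to `q` in `E_J` is a final negative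
edge with destination `d`, via the zero path `ω` from `q` to `d`; the height of the
edge is `ω.verts.length - 1`. -/
def IsFinalNeg (G : FinGraph) (J : Set (FPath G × FPath G))
    (p q : FPath G × FPath G) (ω : CGPath G J) (d : FPath G × FPath G) : Prop :=
  p ∈ J ∧ q ∈ J ∧ CGAdj p q ∧ cgDeg p q < 0 ∧
    ω.verts.head ω.ne = q ∧ ω.verts.getLast ω.ne = d ∧
    (ω.verts.Chain' fun a b => cgDeg a b = 0) ∧ AllOutPositive G J d

/-- `(E_J, E)` is left-synchronizing with delay `m` : any two paths of length `m`
(i.e. with `m+1` vertices) in `E_J` with the same `E`-label have the same source. -/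
def LeftSyncDelay (G : FinGraph) (J : Set (FPath G × FPath G)) (m : ℕ) : Prop :=
  ∀ ω ξ : CGPath G J, ω.verts.length = m + 1 → ξ.verts.length = m + 1 →
    ω.elabel = ξ.elabel → ω.verts.head ω.ne = ξ.verts.head ξ.ne

/-- An infinite path in the coding graph `E_J`. -/
structure CGIPath (G : FinGraph) (J : Set (FPath G × FPath G)) where
  verts : ℕ → FPath G × FPath G
  mem : ∀ i, verts i ∈ J
  adj : ∀ i, CGAdj (verts i) (verts (i + 1))

/-- The infinite `E`-label of an infinite coding-graph path is the infinite path `α`. -/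
def ELabelInf {J : Set (FPath G × FPath G)} (ω : CGIPath G J) (α : IPath G) : Prop :=
  ∀ i, (ω.verts i).2.edges.head? = some (α.edges i)

/-- A transducer with input alphabet `A`, output alphabet `B`, a finite state set,
an initial state and a transition function. -/
structure Transducer (A B : Type) where
  S : Type
  finS : Finite S
  init : S
  tr : S → A → S × List B

/-- The state sequence of a transducer on an infinite input word. -/
def Transducer.states {A B : Type} (T : Transducer A B) (α : ℕ → A) : ℕ → T.S
  | 0 => T.init
  | n + 1 => (T.tr (T.states α n) (α n)).1

/-- The `n`-th output block of a transducer on an infinite input word. -/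
def Transducer.outBlock {A B : Type} (T : Transducer A B) (α : ℕ → A) (n : ℕ) : List B :=
  (T.tr (T.states α n) (α n)).2

/-- The concatenation of the first `n` blocks of a sequence of finite words. -/
def joinUpTo {X : Type} (f : ℕ → List X) (n : ℕ) : List X :=
  ((List.range n).map f).flatten

/-- Two infinite concatenations of sequences of finite words are equal. -/
def StreamsEq {X : Type} (f g : ℕ → List X) : Prop :=
  (∀ n, ∃ m, joinUpTo f n <+: joinUpTo g m) ∧ ∀ n, ∃ m, joinUpTo g n <+: joinUpTo f m

/-- The type of edges of the coding graph `E_J`. -/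
def CGEdgeT (G : FinGraph) (J : Set (FPath G × FPath G)) : Type :=
  {e : (FPath G × FPath G) × (FPath G × FPath G) // e.1 ∈ J ∧ e.2 ∈ J ∧ CGAdj e.1 e.2}

/-- The sequence of edges of an infinite coding-graph path. -/
def CGIPath.edgeSeq {J : Set (FPath G × FPath G)} (ω : CGIPath G J) (i : ℕ) : CGEdgeT G J :=
  ⟨(ω.verts i, ω.verts (i + 1)), ω.mem i, ω.mem (i + 1), ω.adj i⟩

section Auxiliary

/-- A choice of outgoing edge at every vertex. -/
noncomputable def extStep (hG : Standing G) (v : G.V) : G.E := (hG.no_sinks v).choose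

lemma extStep_src (hG : Standing G) (v : G.V) : G.src (extStep hG v) = v :=
  (hG.no_sinks v).choose_spec

/-- An infinite sequence of composable edges starting at `v`. -/
noncomputable def extSeq (hG : Standing G) (v : G.V) : ℕ → G.E
  | 0 => extStep hG v
  | n + 1 => extStep hG (G.rng (extSeq hG v n))

lemma extSeq_src (hG : Standing G) (v : G.V) : G.src (extSeq hG v 0) = v :=
  extStep_src hG v

lemma extSeq_chain (hG : Standing G) (v : G.V) (n : ℕ) :
    G.src (extSeq hG v (n + 1)) = G.rng (extSeq hG v n) :=
  extStep_src hG _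

lemma range_eq_rng_getLast (p : FPath G) (h : p.edges ≠ []) :
    p.range = G.rng (p.edges.getLast h) := by
  rw [FPath.range, List.getLast?_eq_getLast h]
  rfl

/-- Every cylinder set is nonempty (since `G` has no sinks). -/
lemma cylinder_nonempty (hG : Standing G) (p : FPath G) : (cylinder p).Nonempty := by
  classical
  set n := p.edges.length with hn
  set f : ℕ → G.E := fun i =>
    if h : i < n then p.edges[i] else extSeq hG p.range (i - n) with hf
  have hchain : ∀ i, G.rng (f i) = G.src (f (i + 1)) := by
    intro i
    by_cases h1 : i + 1 < n
    · have h0 : i < n := by omega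
      have := List.isChain_iff_getElem.mp p.chain i (by omega)
      simpa [hf, dif_pos h0, dif_pos h1, List.get_eq_getElem] using this
    · by_cases h0 : i < n
      · have hne : p.edges ≠ [] := by
          intro hnil
          rw [hnil] at hn
          simp [hn] at h0
        have hi : i = n - 1 := by omega
        have hlast : p.edges.getLast hne = p.edges[i] := by
          rw [List.getLast_eq_getElem]
          congr 1
          omega
        have h2 : ¬ i + 1 < n := h1
        have h3 : i + 1 - n = 0 := by omega
        rw [hf]
        simp only [dif_pos h0, dif_neg h2, h3]
        rw [extSeq_src hG p.range, range_eq_rng_getLast p hne, hlast]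
      · have h2 : ¬ i + 1 < n := by omega
        have h3 : i + 1 - n = (i - n) + 1 := by omega
        rw [hf]
        simp only [dif_neg h0, dif_neg h2, h3]
        exact (extSeq_chain hG p.range (i - n)).symm
  refine ⟨⟨f, hchain⟩, ?_, ?_⟩
  · show G.src (f 0) = p.source
    by_cases h0 : 0 < n
    · have : f 0 = p.edges[0] := by simp [hf, dif_pos h0]
      rw [this]
      refine p.head_src _ ?_
      rw [List.head?_eq_head (by intro hnil; rw [hnil] at hn; simp [hn] at h0)]
      simp [List.head_eq_getElem]
    · have hnil : p.edges = [] := by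
        cases hpe : p.edges with
        | nil => rfl
        | cons a l => rw [hpe] at hn; simp [hn] at h0
      have : f 0 = extSeq hG p.range 0 := by simp [hf, hn, hnil]
      rw [this, extSeq_src hG p.range]
      rw [FPath.range, hnil]
      rfl
  · intro i hilt
    simp [hf, hn, hilt]
  
/-- Comparable cylinders: a longer path's cylinder is contained in a prefix's. -/
lemma cylinder_mono {p q : FPath G} (h : FPath.Prefix p q) : cylinder q ⊆ cylinder p := by
  rintro x ⟨hs, hi⟩
  refine ⟨hs.trans h.1.symm, fun i hilt => ?_⟩
  have hilt' : i < q.edges.length := hilt.trans_le h.2.length_le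
  rw [hi i hilt']
  simp only [List.get_eq_getElem]
  exact (h.2.getElem hilt).symm

/-- Non-negativity of an edge and adjacency force the tail to be a prefix. -/
lemma adj_prefix_of_nonneg {p q : FPath G × FPath G} (h : CGAdj p q)
    (hd : 0 ≤ cgDeg p q) : FPath.Prefix p.2.tail q.1 := by
  rcases h with h | h
  · exact h
  · have hlen : q.1.edges.length ≤ p.2.tail.edges.length := h.2.length_le
    have hlen' : p.2.tail.edges.length ≤ q.1.edges.length := by
      unfold cgDeg at hd
      omega
    have heq : q.1.edges = p.2.tail.edges := h.2.eq_of_length (le_antisymm hlen hlen')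
    exact ⟨h.1.symm, by rw [heq]⟩

lemma head?_eq_some_of_mem {J : Set (FPath G × FPath G)} (hJ : IsUnitaryJ G J)
    {p : FPath G × FPath G} (hp : p ∈ J) :
    ∃ e, p.2.edges.head? = some e := by
  have := hJ.ne_nil p hp
  cases h : p.2.edges with
  | nil => exact absurd h this
  | cons a l => exact ⟨a, by simp⟩

/-- The one-step left-resolving property. -/
lemma step_eq (hG : Standing G) {J : Set (FPath G × FPath G)} (hJ : IsUnitaryJ G J)
    (hnn : AllEdgesNonneg G J) {p p' q : FPath G × FPath G}
    (hp : p ∈ J) (hp' : p' ∈ J) (hq : q ∈ J)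
    (h1 : CGAdj p q) (h2 : CGAdj p' q)
    (hh : p.2.edges.head? = p'.2.edges.head?) : p = p' := by
  by_contra hne
  have pre1 := adj_prefix_of_nonneg h1 (hnn p hp q hq h1)
  have pre2 := adj_prefix_of_nonneg h2 (hnn p' hp' q hq h2)
  obtain ⟨e, he⟩ := head?_eq_some_of_mem hJ hp
  have he' : p'.2.edges.head? = some e := hh ▸ he
  have hsrc : p.2.source = G.src e := (p.2.head_src e he).symm
  have hsrc' : p'.2.source = G.src e := (p'.2.head_src e he').symm
  have hcons : e :: p.2.edges.tail = p.2.edges := List.cons_head?_tail he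
  have hcons' : e :: p'.2.edges.tail = p'.2.edges := List.cons_head?_tail he'
  have htail1 : p.2.edges.tail <+: q.1.edges := pre1.2
  have htail2 : p'.2.edges.tail <+: q.1.edges := pre2.2
  have hcyl1 := cylinder_nonempty hG p.2
  have hcyl2 := cylinder_nonempty hG p'.2
  have hdisj := hJ.disj₂ p hp p' hp' hne
  rcases List.prefix_or_prefix_of_prefix htail1 htail2 with hc | hc
  · have hpre : FPath.Prefix p.2 p'.2 := by
      refine ⟨hsrc.trans hsrc'.symm, ?_⟩
      rw [← hcons, ← hcons']
      exact (List.cons_prefix_cons).mpr ⟨rfl, hc⟩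
    obtain ⟨x, hx⟩ := hcyl2
    have : x ∈ cylinder p.2 ∩ cylinder p'.2 := ⟨cylinder_mono hpre hx, hx⟩
    rw [hdisj] at this
    exact this
  · have hpre : FPath.Prefix p'.2 p.2 := by
      refine ⟨hsrc'.trans hsrc.symm, ?_⟩
      rw [← hcons, ← hcons']
      exact (List.cons_prefix_cons).mpr ⟨rfl, hc⟩
    obtain ⟨x, hx⟩ := hcyl1
    have : x ∈ cylinder p.2 ∩ cylinder p'.2 := ⟨hx, cylinder_mono hpre hx⟩
    rw [hdisj] at this
    exact this

/-- Induction along the reversed vertex lists. -/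
lemma back_eq (hG : Standing G) {J : Set (FPath G × FPath G)} (hJ : IsUnitaryJ G J)
    (hnn : AllEdgesNonneg G J) (l₁ : List (FPath G × FPath G)) :
    ∀ l₂ : List (FPath G × FPath G), (∀ v ∈ l₁, v ∈ J) → (∀ v ∈ l₂, v ∈ J) →
      l₁.Chain' (flip CGAdj) → l₂.Chain' (flip CGAdj) →
      l₁.filterMap (fun v => v.2.edges.head?) = l₂.filterMap (fun v => v.2.edges.head?) →
      l₁.head? = l₂.head? → l₁ = l₂ := by
  induction l₁ with
  | nil =>
    intro l₂ _ _ _ _ _ hh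
    cases l₂ with
    | nil => rfl
    | cons a t => simp at hh
  | cons a t ih =>
    intro l₂ hm1 hm2 hc1 hc2 hlab hh
    cases l₂ with
    | nil => simp at hh
    | cons a' t' =>
      have haa : a = a' := by simpa using hh
      subst haa
      have ha : a ∈ J := hm1 a (by simp)
      obtain ⟨e, he⟩ := head?_eq_some_of_mem hJ ha
      simp only [List.filterMap_cons, he] at hlab
      have hlab' : t.filterMap (fun v => v.2.edges.head?)
          = t'.filterMap (fun v => v.2.edges.head?) := by
        exact List.cons_injective hlab
      cases t with
      | nil =>
        cases t' with
        | nil => rfl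
        | cons b t'' =>
          exfalso
          obtain ⟨f, hf⟩ := head?_eq_some_of_mem hJ (hm2 b (by simp))
          simp only [List.filterMap_nil, List.filterMap_cons, hf] at hlab'
          simp at hlab'
      | cons b t'' =>
        cases t' with
        | nil =>
          exfalso
          obtain ⟨f, hf⟩ := head?_eq_some_of_mem hJ (hm1 b (by simp))
          simp only [List.filterMap_nil, List.filterMap_cons, hf] at hlab'
          simp at hlab'
        | cons b' t''' =>
          have hb : b ∈ J := hm1 b (by simp)
          have hb' : b' ∈ J := hm2 b' (by simp)
          obtain ⟨f, hf⟩ := head?_eq_some_of_mem hJ hb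
          obtain ⟨f', hf'⟩ := head?_eq_some_of_mem hJ hb'
          simp only [List.filterMap_cons, hf, hf'] at hlab'
          have hff : f = f' := by
            have := congrArg List.head? hlab'
            simpa using this
          subst hff
          have hadj1 : CGAdj b a := (List.isChain_cons_cons.mp hc1).1
          have hadj2 : CGAdj b' a := (List.isChain_cons_cons.mp hc2).1
          have hbb : b = b' :=
            step_eq hG hJ hnn hb hb' ha hadj1 hadj2 (by rw [hf, hf'])
          subst hbb
          have htails : b :: t'' = b :: t''' := by
            refine ih (b :: t''') (fun v hv => hm1 v (by simp [hv]))
              (fun v hv => hm2 v (by simp [hv]))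
              (List.isChain_cons_cons.mp hc1).2 (List.isChain_cons_cons.mp hc2).2 ?_ rfl
            simp only [List.filterMap_cons, hf]
            exact congrArg (List.cons f) (List.cons_injective hlab')
          rw [htails]

end Auxiliary

/-- if every edge of `E_J` is non-negative, then the left-resolving
property extends to paths: finite paths in `E_J` with the same `E`-label and the same
range coincide. -/
theorem left_resolving_paths (G : FinGraph) (hG : Standing G)
    (J : Set (FPath G × FPath G)) (hJ : IsUnitaryJ G J)
    (hnn : AllEdgesNonneg G J) (ω ξ : CGPath G J)
    (he : ω.elabel = ξ.elabel)
    (hr : ω.verts.getLast ω.ne = ξ.verts.getLast ξ.ne) :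
    ω = ξ := by
  have hvr : ω.verts.reverse = ξ.verts.reverse := by
    refine back_eq hG hJ hnn ω.verts.reverse ξ.verts.reverse
      (fun v hv => ω.mem v (List.mem_reverse.mp hv))
      (fun v hv => ξ.mem v (List.mem_reverse.mp hv))
      (List.isChain_reverse.mpr ω.adj) (List.isChain_reverse.mpr ξ.adj) ?_ ?_
    · rw [List.filterMap_reverse, List.filterMap_reverse]
      exact congrArg List.reverse he
    · rw [List.head?_reverse, List.head?_reverse,
        List.getLast?_eq_getLast ω.ne, List.getLast?_eq_getLast ξ.ne, hr]
  have hv : ω.verts = ξ.verts := List.reverse_injective hvr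
  obtain ⟨v1, n1, m1, a1⟩ := ω
  obtain ⟨v2, n2, m2, a2⟩ := ξ
  simp only at hv
  subst hv
  rfl
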